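/- Let L be a strongly symmetric ample line bundle of type (1,2,4) on an abelian 3-fold A, with symmetric theta structure, K(L) ≅ ℤ/2 ⊕ ℤ/4 ⊕ ℤ/2 ⊕ ℤ/4 generated by σ₁,τ₁,σ₂,τ₂ with e^L(σ₁,σ₂) = −1, e^L(τ₁,τ₂) = −i, e^L(σ_i,τ_j) = 1; let G' = ⟨σ'₁,(τ'₁)²,(τ'₂)²⟩ ⊂ G(L) be a lift of the maximal isotropic subgroup G = ⟨σ₁,τ₁²,τ₂²⟩, with lifts chosen so o(σ'_i)=2, o(τ'_i)=4 and δ_{−1}(τ'_i) = (τ'_i)^{−1}, and let s₀ be a G'-invariant section with i(s₀) = s₀. Then: (a) i σ'₂(s₀) = σ'₂(s₀); (b) i τ'_j(s₀) = τ'_j(s₀) for j = 1,2; (c) i σ'₂τ'_j(s₀) = σ'₂τ'_j(s₀); (d) i τ'₁τ'₂(s₀) = −τ'₁τ'₂(s₀); (e) i σ'₂τ'₁τ'₂(s₀) = −σ'₂τ'₁τ'₂(s₀). -/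
import Mathlib


/-!
STATEMENT 6.
Let `L` be a strongly symmetric ample line bundle of type `(1,2,4)` on an
abelian 3-fold `A`, with a symmetric theta structure;
`K(L) ≅ ℤ/2 ⊕ ℤ/4 ⊕ ℤ/2 ⊕ ℤ/4` is generated by `σ₁, τ₁, σ₂, τ₂` with
`e^L(σ₁,σ₂) = -1`, `e^L(τ₁,τ₂) = -i`, `e^L(σᵢ,τⱼ) = 1`.  Let
`G' = ⟨σ'₁, (τ'₁)², (τ'₂)²⟩ ⊆ 𝒢(L)` be a lift of the maximal isotropic
subgroup `G = ⟨σ₁, τ₁², τ₂²⟩` with `o(σ'ᵢ) = 2`, `o(τ'ᵢ) = 4` and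
`δ₋₁(τ'ᵢ) = (τ'ᵢ)⁻¹`, and let `s₀` be a `G'`-invariant section with
`i(s₀) = s₀`.  Then:
(a) `i σ'₂(s₀) = σ'₂(s₀)`;
(b) `i τ'ⱼ(s₀) = τ'ⱼ(s₀)` for `j = 1,2`;
(c) `i σ'₂τ'ⱼ(s₀) = σ'₂τ'ⱼ(s₀)`;
(d) `i τ'₁τ'₂(s₀) = -τ'₁τ'₂(s₀)`;
(e) `i σ'₂τ'₁τ'₂(s₀) = -σ'₂τ'₁τ'₂(s₀)`.
-/

/-- Abstract model of the theta group `𝒢(L)` of a symmetric ample line bundle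
`L` on an abelian variety, as a central extension `1 → ℂ* → 𝒢(L) → K(L) → 0`
with the Weil form as commutator, together with its weight-one action on
`H⁰(L)`, the action of the inversion `i` (via the normalized isomorphism
`ψ : L ≅ i*L`, `ψ(0) = +1`) and the conjugation `δ₋₁ : z ↦ izi`. -/
structure SymmetricThetaActionSetup where
  /-- the points of the abelian variety `A` -/
  A : Type
  [grpA : AddCommGroup A]
  /-- the fixed group `K(L)` -/
  K : AddSubgroup A
  /-- the theta group `𝒢(L)` -/
  G : Type
  [grpG : Group G]
  /-- the central embedding `ℂ* → 𝒢(L)` -/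
  iota : ℂˣ →* G
  iota_injective : Function.Injective iota
  iota_central : ∀ (c : ℂˣ) (x : G), iota c * x = x * iota c
  /-- the projection `𝒢(L) → K(L)` -/
  proj : G → A
  proj_one : proj 1 = 0
  proj_mul : ∀ x y, proj (x * y) = proj x + proj y
  proj_mem : ∀ x, proj x ∈ K
  proj_surjOn : ∀ a ∈ K, ∃ x, proj x = a
  proj_ker : ∀ x, proj x = 0 ↔ ∃ c, x = iota c
  /-- the Weil form `e^L`, as the commutator form of `𝒢(L)` -/
  weil : A → A → ℂˣ
  weil_comm : ∀ x y : G, x * y = iota (weil (proj x) (proj y)) * (y * x)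
  /-- `δ₋₁ : 𝒢(L) → 𝒢(L)`, `z ↦ izi` -/
  deltaNeg : G → G
  deltaNeg_mul : ∀ x y, deltaNeg (x * y) = deltaNeg x * deltaNeg y
  deltaNeg_invol : ∀ x, deltaNeg (deltaNeg x) = x
  deltaNeg_iota : ∀ c, deltaNeg (iota c) = iota c
  deltaNeg_proj : ∀ x, proj (deltaNeg x) = - proj x
  /-- the form `e^L_* : A₂ → {±1}` of the symmetric bundle `L` -/
  estar : A → ℂˣ
  estar_sq : ∀ a, estar a * estar a = 1
  estar_zero : estar 0 = 1
  /-- Mumford's lemma: `δ₋₁(z) = e^L_*(z)·z` for `z` of order `2`, `z ≠ ±1` -/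
  mumford : ∀ z : G, z * z = 1 → proj z ≠ 0 → deltaNeg z = iota (estar (proj z)) * z
  /-- the space of sections `H⁰(A,L)` -/
  H0 : Type
  [grpH0 : AddCommGroup H0]
  [modH0 : Module ℂ H0]
  [fdH0 : FiniteDimensional ℂ H0]
  /-- the weight-one action of `𝒢(L)` on `H⁰(L)` -/
  act : G →* (H0 ≃ₗ[ℂ] H0)
  act_iota : ∀ (c : ℂˣ) (v : H0), act (iota c) v = (c : ℂ) • v
  /-- the action of the inversion `i` on `H⁰(L)` -/
  inv : H0 ≃ₗ[ℂ] H0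
  inv_invol : ∀ v, inv (inv v) = v
  /-- compatibility: `i ∘ z ∘ i = δ₋₁(z)` on `H⁰(L)` -/
  inv_act : ∀ (z : G) (v : H0), inv (act z (inv v)) = act (deltaNeg z) v

attribute [instance] SymmetricThetaActionSetup.grpA SymmetricThetaActionSetup.grpG
  SymmetricThetaActionSetup.grpH0 SymmetricThetaActionSetup.modH0
  SymmetricThetaActionSetup.fdH0

theorem statement6 (T : SymmetricThetaActionSetup)
    -- `h⁰(L) = 1·2·4 = 8` (type `(1,2,4)` on an abelian 3-fold)
    (h0 : Module.finrank ℂ T.H0 = 8)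
    -- `K(L) ≅ ℤ/2 ⊕ ℤ/4 ⊕ ℤ/2 ⊕ ℤ/4`
    (hK : Nat.card T.K = 64)
    -- `L` is strongly symmetric
    (hstrong : ∀ g ∈ T.K, g + g = 0 → T.estar g = 1)
    -- lifts `σ'₁, σ'₂, τ'₁, τ'₂ ∈ 𝒢(L)` of generators `σ₁, σ₂, τ₁, τ₂` of
    -- `K(L) ≅ ℤ/2 ⊕ ℤ/4 ⊕ ℤ/2 ⊕ ℤ/4`, with `o(σ'ᵢ) = 2`, `o(τ'ᵢ) = 4`
    (σ₁' σ₂' τ₁' τ₂' : T.G)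
    (hσ₁ : σ₁' * σ₁' = 1) (hσ₂ : σ₂' * σ₂' = 1)
    (hσ₁0 : T.proj σ₁' ≠ 0) (hσ₂0 : T.proj σ₂' ≠ 0)
    (hτ₁ : τ₁' ^ 4 = 1) (hτ₂ : τ₂' ^ 4 = 1)
    (hτ₁o : τ₁' * τ₁' ≠ 1) (hτ₂o : τ₂' * τ₂' ≠ 1)
    (hτ₁sq0 : T.proj (τ₁' * τ₁') ≠ 0) (hτ₂sq0 : T.proj (τ₂' * τ₂') ≠ 0)
    -- `K(L)` is generated by `σ₁, τ₁, σ₂, τ₂`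
    (hgen : T.K = AddSubgroup.closure {T.proj σ₁', T.proj τ₁', T.proj σ₂', T.proj τ₂'})
    -- values of the Weil form: `e^L(σ₁,σ₂) = -1`, `e^L(τ₁,τ₂) = -i`,
    -- `e^L(σᵢ,τⱼ) = 1`
    (hw₁ : (T.weil (T.proj σ₁') (T.proj σ₂') : ℂ) = -1)
    (hw₂ : (T.weil (T.proj τ₁') (T.proj τ₂') : ℂ) = -Complex.I)
    (hw₃ : T.weil (T.proj σ₁') (T.proj τ₁') = 1)
    (hw₄ : T.weil (T.proj σ₁') (T.proj τ₂') = 1)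
    (hw₅ : T.weil (T.proj σ₂') (T.proj τ₁') = 1)
    (hw₆ : T.weil (T.proj σ₂') (T.proj τ₂') = 1)
    -- normalization of the lifts: `δ₋₁(σ'ⱼ) = σ'ⱼ` and `δ₋₁(τ'ⱼ) = (τ'ⱼ)⁻¹`
    (hδσ₁ : T.deltaNeg σ₁' = σ₁') (hδσ₂ : T.deltaNeg σ₂' = σ₂')
    (hδτ₁ : T.deltaNeg τ₁' = τ₁'⁻¹) (hδτ₂ : T.deltaNeg τ₂' = τ₂'⁻¹)
    -- `s₀` is a `G'`-invariant section, `G' = ⟨σ'₁, (τ'₁)², (τ'₂)²⟩`,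
    -- with `i(s₀) = s₀`
    (s₀ : T.H0) (hs₀ : s₀ ≠ 0)
    (hG' : ∀ z ∈ Subgroup.closure ({σ₁', τ₁' * τ₁', τ₂' * τ₂'} : Set T.G),
      T.act z s₀ = s₀)
    (hinvs₀ : T.inv s₀ = s₀)
    :
    -- (a)
    T.inv (T.act σ₂' s₀) = T.act σ₂' s₀ ∧
    -- (b)
    T.inv (T.act τ₁' s₀) = T.act τ₁' s₀ ∧
    T.inv (T.act τ₂' s₀) = T.act τ₂' s₀ ∧
    -- (c)
    T.inv (T.act (σ₂' * τ₁') s₀) = T.act (σ₂' * τ₁') s₀ ∧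
    T.inv (T.act (σ₂' * τ₂') s₀) = T.act (σ₂' * τ₂') s₀ ∧
    -- (d)
    T.inv (T.act (τ₁' * τ₂') s₀) = - T.act (τ₁' * τ₂') s₀ ∧
    -- (e)
    T.inv (T.act (σ₂' * τ₁' * τ₂') s₀) = - T.act (σ₂' * τ₁' * τ₂') s₀ := by

  classical
  have key : ∀ z, T.inv (T.act z s₀) = T.act (T.deltaNeg z) s₀ := by
    intro z
    have h := T.inv_act z s₀
    rwa [hinvs₀] at h
  have actmul : ∀ (a b : T.G) (v : T.H0), T.act (a * b) v = T.act a (T.act b v) := by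
    intro a b v; rw [map_mul]; rfl
  have actiota : ∀ (c : ℂˣ) (x : T.G) (v : T.H0),
      T.act (T.iota c * x) v = (c : ℂ) • T.act x v := by
    intro c x v; rw [actmul, T.act_iota]
  have hτ₁s : T.act (τ₁' * τ₁') s₀ = s₀ :=
    hG' _ (Subgroup.subset_closure (by simp))
  have hτ₂s : T.act (τ₂' * τ₂') s₀ = s₀ :=
    hG' _ (Subgroup.subset_closure (by simp))
  have hcube₁ : τ₁'⁻¹ = τ₁' * (τ₁' * τ₁') := by
    have h : τ₁' * (τ₁' * τ₁') * τ₁' = 1 := by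
      rw [show τ₁' * (τ₁' * τ₁') * τ₁' = τ₁' ^ 4 by simp [pow_succ, mul_assoc]]; exact hτ₁
    exact (eq_inv_of_mul_eq_one_left h).symm
  have hcube₂ : τ₂'⁻¹ = τ₂' * (τ₂' * τ₂') := by
    have h : τ₂' * (τ₂' * τ₂') * τ₂' = 1 := by
      rw [show τ₂' * (τ₂' * τ₂') * τ₂' = τ₂' ^ 4 by simp [pow_succ, mul_assoc]]; exact hτ₂
    exact (eq_inv_of_mul_eq_one_left h).symm
  have hinv₁ : T.act τ₁'⁻¹ s₀ = T.act τ₁' s₀ := by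
    rw [hcube₁, actmul, hτ₁s]
  have hinv₂ : T.act τ₂'⁻¹ s₀ = T.act τ₂' s₀ := by
    rw [hcube₂, actmul, hτ₂s]
  set w : ℂˣ := T.weil (T.proj τ₁') (T.proj τ₂') with hw
  have comm : τ₁' * τ₂' = T.iota w * (τ₂' * τ₁') := T.weil_comm τ₁' τ₂'
  have comm2 : τ₂' * τ₁' = T.iota w⁻¹ * (τ₁' * τ₂') := by
    rw [comm, ← mul_assoc, ← map_mul, inv_mul_cancel, map_one, one_mul]
  have hc' : ∀ (c : ℂˣ) (x y : T.G), x * (T.iota c * y) = T.iota c * (x * y) := by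
    intro c x y; rw [← mul_assoc, ← T.iota_central, mul_assoc]
  have hid : τ₁'⁻¹ * τ₂' = T.iota w⁻¹ * (τ₂' * τ₁'⁻¹) := by
    apply mul_left_cancel (a := τ₁')
    rw [← mul_assoc, mul_inv_cancel, one_mul, hc', ← mul_assoc τ₁', comm]
    rw [mul_assoc, hc', ← mul_assoc, ← map_mul]
    simp [mul_assoc]
  have hwI : ((w⁻¹ : ℂˣ) : ℂ) = Complex.I := by
    rw [Units.val_inv_eq_inv_val, hw₂]
    simp [inv_neg, Complex.inv_I]
  have hd : T.act (τ₁'⁻¹ * τ₂'⁻¹) s₀ = - T.act (τ₁' * τ₂') s₀ := by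
    conv_lhs => rw [actmul, hinv₂, ← actmul, hid, actiota, actmul, hinv₁, ← actmul,
      comm2, actiota]
    rw [hwI, smul_smul, Complex.I_mul_I, neg_one_smul]
  refine ⟨?_, ?_, ?_, ?_, ?_, ?_, ?_⟩
  · rw [key, hδσ₂]
  · rw [key, hδτ₁, hinv₁]
  · rw [key, hδτ₂, hinv₂]
  · rw [key, T.deltaNeg_mul, hδσ₂, hδτ₁, actmul, hinv₁, ← actmul]
  · rw [key, T.deltaNeg_mul, hδσ₂, hδτ₂, actmul, hinv₂, ← actmul]
  · rw [key, T.deltaNeg_mul, hδτ₁, hδτ₂, hd]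
  · rw [key, T.deltaNeg_mul, T.deltaNeg_mul, hδσ₂, hδτ₁, hδτ₂, mul_assoc, actmul, hd,
      map_neg, ← actmul, ← mul_assoc]
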